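/- Rational numbers $Q_j, u_j, d_j, L_j, e_j, \nu_j$ ($j=1,2,3$) and $H_u, H_d$ satisfy the supersymmetric Green-Schwarz system (‡) if and only if $Q = (\tfrac{103}{27}, \tfrac{76}{27}, \tfrac{22}{27})$, $u = (\tfrac{128}{27}, \tfrac{47}{27}, \tfrac{20}{27})$, $d = (\tfrac{71}{27}, \tfrac{44}{27}, \tfrac{17}{27})$, $L = (\tfrac{23}{9}, \tfrac{14}{9}, \tfrac{14}{9})$, $e = (\tfrac{44}{9}, \tfrac{17}{9}, \tfrac{8}{9})$, $\nu = (1, 0, 0)$, $H_u = -\tfrac{14}{9}$, $H_d = \tfrac{5}{9}$; i.e., system (‡) has this unique rational solution. -/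

import Mathlib

set_option maxHeartbeats 1000000


/-- The supersymmetric Green-Schwarz system (‡): the Green-Schwarz anomaly conditions
together with the Froggatt-Nielsen phenomenological constraints. -/
def SystemDoubleDagger (Q u d L e ν : Fin 3 → ℚ) (Hu Hd : ℚ) : Prop :=
  (∑ j, (Q j ^ 2 - 2 * u j ^ 2 + d j ^ 2 - L j ^ 2 + e j ^ 2)) + Hu ^ 2 - Hd ^ 2 = 0 ∧
  1/2 * ((∑ j, (3 * Q j + L j)) + Hu + Hd)
    - 3/20 * (2/3 * (∑ j, (Q j + 8 * u j + 2 * d j + 3 * L j + 6 * e j))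
      + 2 * (Hu + Hd)) = 0 ∧
  (∑ j, (2 * Q j + u j + d j)) - (∑ j, (3 * Q j + L j)) - Hu - Hd = 0 ∧
  Q 2 + u 2 + Hu = 0 ∧ Q 1 + u 1 + Hu = 3 ∧ Q 0 + u 0 + Hu = 7 ∧
  Q 2 + d 2 + Hd = 2 ∧ Q 1 + d 1 + Hd = 5 ∧ Q 0 + d 0 + Hd = 7 ∧
  L 2 + e 2 + Hd = 3 ∧ L 1 + e 1 + Hd = 4 ∧ L 0 + e 0 + Hd = 8 ∧
  Q 0 - Q 1 = 1 ∧ Q 1 - Q 2 = 2 ∧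
  L 2 + ν 2 + Hu = 0 ∧ L 0 - L 1 = 1 ∧ L 1 - L 2 = 0 ∧
  ν 0 = 1 ∧ ν 1 = 0 ∧ ν 2 = 0

/-- The supersymmetric Green-Schwarz system (‡) has a unique rational solution, the
charge assignment of Table 3. -/
theorem systemDoubleDagger_iff_unique_solution (Q u d L e ν : Fin 3 → ℚ) (Hu Hd : ℚ) :
    SystemDoubleDagger Q u d L e ν Hu Hd ↔
      (Q = ![103/27, 76/27, 22/27] ∧ u = ![128/27, 47/27, 20/27] ∧
       d = ![71/27, 44/27, 17/27] ∧ L = ![23/9, 14/9, 14/9] ∧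
       e = ![44/9, 17/9, 8/9] ∧ ν = ![1, 0, 0] ∧
       Hu = -14/9 ∧ Hd = 5/9) := by
  constructor
  · rintro ⟨h1, h2, h3, h4, h5, h6, h7, h8, h9, h10, h11, h12, h13, h14, h15, h16, h17,
      h18, h19, h20⟩
    simp only [Fin.sum_univ_three] at h1 h2 h3
    have eQ0 : Q 0 = 4 - Hd / 3 := by linarith
    have eQ1 : Q 1 = 3 - Hd / 3 := by linarith
    have eQ2 : Q 2 = 1 - Hd / 3 := by linarith
    have eHu : Hu = -1 - Hd := by linarith
    have eu0 : u 0 = 4 + 4 * Hd / 3 := by linarith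
    have eu1 : u 1 = 1 + 4 * Hd / 3 := by linarith
    have eu2 : u 2 = 4 * Hd / 3 := by linarith
    have ed0 : d 0 = 3 - 2 * Hd / 3 := by linarith
    have ed1 : d 1 = 2 - 2 * Hd / 3 := by linarith
    have ed2 : d 2 = 1 - 2 * Hd / 3 := by linarith
    have eL2 : L 2 = 1 + Hd := by linarith
    have eL1 : L 1 = 1 + Hd := by linarith
    have eL0 : L 0 = 2 + Hd := by linarith
    have ee0 : e 0 = 6 - 2 * Hd := by linarith
    have ee1 : e 1 = 3 - 2 * Hd := by linarith
    have ee2 : e 2 = 2 - 2 * Hd := by linarith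
    rw [eQ0, eQ1, eQ2, eu0, eu1, eu2, ed0, ed1, ed2, eL0, eL1, eL2, ee0, ee1, ee2, eHu]
      at h1
    have hHd : Hd = 5 / 9 := by linear_combination -1 / 90 * h1
    refine ⟨?_, ?_, ?_, ?_, ?_, ?_, by linarith, by linarith⟩ <;>
      funext i <;> fin_cases i <;> simp <;> linarith
  · rintro ⟨hQ, hu, hd, hL, he, hν, hHu, hHd⟩
    subst hQ hu hd hL he hν hHu hHd
    refine ⟨?_, ?_, ?_, ?_, ?_, ?_, ?_, ?_, ?_, ?_, ?_, ?_, ?_, ?_, ?_, ?_, ?_, ?_, ?_, ?_⟩ <;>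
      norm_num [Fin.sum_univ_three, Matrix.cons_val_two, Matrix.vecHead, Matrix.vecTail]
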